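/- For α > 1 irrational and H = N₀ ∪ Q>α, the minimum of the set of distances Δ(H) is 1, and for every ε > 0 with ᾱ + 2ε < 1 and 2ᾱ + 2ε ≠ 1 (where ᾱ = α − ⌊α⌋), the element 2(α+ε) has set of lengths exactly {2, ⌊α⌋ + 1}. -/

import Mathlib

/-- The Puiseux monoid H = ℕ₀ ∪ ℚ>α for a real number α > 1. -/
def Halpha (α : ℝ) (hα : 1 < α) : AddSubmonoid ℚ where
  carrier := {q : ℚ | (∃ n : ℕ, q = (n : ℚ)) ∨ α < (q : ℝ)}
  zero_mem' := Or.inl ⟨0, by norm_num⟩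
  add_mem' := by
    rintro x y (⟨n, rfl⟩ | hx) (⟨m, rfl⟩ | hy)
    · exact Or.inl ⟨n + m, by push_cast; ring⟩
    · right; push_cast
      have : (0 : ℝ) ≤ (n : ℝ) := Nat.cast_nonneg n
      linarith
    · right; push_cast
      have : (0 : ℝ) ≤ (m : ℝ) := Nat.cast_nonneg m
      linarith
    · right; push_cast; linarith

/-- An element of a Puiseux monoid is an atom if it is nonzero and not the sum
of two nonzero elements. -/
def PuiseuxAtom (H : AddSubmonoid ℚ) (u : ℚ) : Prop :=
  u ∈ H ∧ u ≠ 0 ∧ ¬∃ x ∈ H, ∃ y ∈ H, x ≠ 0 ∧ y ≠ 0 ∧ u = x + y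

/-- Set of lengths of an element of a Puiseux monoid. -/
def PuiseuxL (H : AddSubmonoid ℚ) (a : ℚ) : Set ℕ :=
  {k : ℕ | ∃ f : Fin k → ℚ, (∀ i, PuiseuxAtom H (f i)) ∧ a = ∑ i, f i}

/-- The set of distances Δ(H) of a Puiseux monoid: the successive differences
occurring in sets of lengths. -/
def PuiseuxDelta (H : AddSubmonoid ℚ) : Set ℕ :=
  {d : ℕ | 0 < d ∧ ∃ a ∈ H, ∃ k : ℕ, k ∈ PuiseuxL H a ∧ k + d ∈ PuiseuxL H a ∧
    ∀ j : ℕ, k < j → j < k + d → j ∉ PuiseuxL H a}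

section Aux
variable {α : ℝ} {hα : 1 < α}

lemma mem_Halpha {q : ℚ} : q ∈ Halpha α hα ↔ (∃ n : ℕ, q = (n : ℚ)) ∨ α < (q : ℝ) :=
  Iff.rfl

lemma one_le_of_mem {q : ℚ} (hq : q ∈ Halpha α hα) (h0 : q ≠ 0) : (1 : ℝ) ≤ (q : ℝ) := by
  rcases hq with ⟨n, rfl⟩ | h
  · have hn : 1 ≤ n := Nat.one_le_iff_ne_zero.mpr (by rintro rfl; exact h0 (by norm_num))
    exact_mod_cast hn
  · linarith

lemma atom_one : PuiseuxAtom (Halpha α hα) 1 := by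
  refine ⟨Or.inl ⟨1, by norm_num⟩, one_ne_zero, ?_⟩
  rintro ⟨x, hx, y, hy, hx0, hy0, hxy⟩
  have h1 := one_le_of_mem hx hx0
  have h2 := one_le_of_mem hy hy0
  have : ((1 : ℚ) : ℝ) = (x : ℝ) + (y : ℝ) := by rw [hxy]; push_cast; ring
  norm_num at this
  linarith

lemma atom_big {q : ℚ} (h1 : α < (q : ℝ)) (h2 : (q : ℝ) ≤ α + 1)
    (h3 : ∀ n : ℕ, q ≠ (n : ℚ)) : PuiseuxAtom (Halpha α hα) q := by
  have hq0 : q ≠ 0 := by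
    intro h; rw [h] at h1; norm_num at h1; linarith
  refine ⟨Or.inr h1, hq0, ?_⟩
  rintro ⟨x, hx, y, hy, hx0, hy0, rfl⟩
  have hx1 : (1 : ℝ) ≤ (x : ℝ) := one_le_of_mem hx hx0
  have hy1 : (1 : ℝ) ≤ (y : ℝ) := one_le_of_mem hy hy0
  push_cast at h1 h2
  rcases hx with ⟨n, rfl⟩ | hxα
  · rcases hy with ⟨m, rfl⟩ | hyα
    · exact h3 (n + m) (by push_cast; ring)
    · linarith
  · linarith

lemma atom_cases {u : ℚ} (h : PuiseuxAtom (Halpha α hα) u) :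
    u = 1 ∨ ((∀ n : ℕ, u ≠ (n : ℚ)) ∧ α < (u : ℝ) ∧ (u : ℝ) ≤ α + 1) := by
  obtain ⟨hmem, h0, hni⟩ := h
  by_cases hnat : ∃ n : ℕ, u = (n : ℚ)
  · obtain ⟨n, rfl⟩ := hnat
    left
    have hn0 : n ≠ 0 := by rintro rfl; exact h0 (by norm_num)
    rcases Nat.lt_or_ge n 2 with h2 | h2
    · interval_cases n
      · exact absurd rfl hn0
      · norm_num
    · exfalso
      apply hni
      refine ⟨1, Or.inl ⟨1, by norm_num⟩, ((n - 1 : ℕ) : ℚ), Or.inl ⟨n - 1, rfl⟩,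
        one_ne_zero, ?_, ?_⟩
      · have h1 : n - 1 ≠ 0 := by omega
        exact_mod_cast Nat.cast_ne_zero.mpr h1
      · push_cast [Nat.cast_sub (by omega : 1 ≤ n)]; ring
  · right
    have hα' : α < (u : ℝ) := by
      rcases hmem with h | h
      · exact absurd h hnat
      · exact h
    refine ⟨fun n hn => hnat ⟨n, hn⟩, hα', ?_⟩
    by_contra hgt
    push_neg at hgt
    apply hni
    refine ⟨1, Or.inl ⟨1, by norm_num⟩, u - 1, Or.inr ?_, one_ne_zero, ?_, by ring⟩
    · push_cast; linarith
    · intro h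
      have : u = 1 := by linarith [sub_eq_zero.mp h]
      rw [this] at hα'; norm_num at hα'; linarith

end Aux

section Classify
variable {α : ℝ}

lemma length_classify (hα : 1 < α) {q : ℚ} {ε : ℝ}
    (hε : 0 < ε) (h1 : Int.fract α + 2 * ε < 1) (h2 : 2 * Int.fract α + 2 * ε ≠ 1)
    (hq : (q : ℝ) = α + ε) {k : ℕ} (hk : k ∈ PuiseuxL (Halpha α hα) (2 * q)) :
    k = 2 ∨ k = ⌊α⌋.toNat + 1 := by
  obtain ⟨f, hatom, hsum⟩ := hk
  classical
  set B : Finset (Fin k) := Finset.univ.filter (fun i => ¬ (f i = 1)) with hB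
  set O : Finset (Fin k) := Finset.univ.filter (fun i => f i = 1) with hO
  have hsplit : (∑ i ∈ O, f i) + (∑ i ∈ B, f i) = 2 * q := by
    rw [hsum, hB, hO]
    exact Finset.sum_filter_add_sum_filter_not _ _ _
  have hOsum : (∑ i ∈ O, f i) = (O.card : ℚ) := by
    rw [Finset.sum_congr rfl (fun i hi => (Finset.mem_filter.mp hi).2)]
    simp
    convert rfl
  have hcard : O.card + B.card = k := by
    rw [hO, hB]
    simpa using Finset.card_filter_add_card_filter_not (s := Finset.univ)
      (p := fun i => f i = 1)
  have hbig : ∀ i ∈ B, (∀ n : ℕ, f i ≠ (n : ℚ)) ∧ α < (f i : ℝ) ∧ (f i : ℝ) ≤ α + 1 := by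
    intro i hi
    have hne : ¬ (f i = 1) := (Finset.mem_filter.mp hi).2
    rcases atom_cases (hatom i) with h | h
    · exact absurd h hne
    · exact h
  set s := O.card with hs
  set t := B.card with ht
  have hmain : (s : ℝ) + (∑ i ∈ B, ((f i : ℝ))) = 2 * α + 2 * ε := by
    have h := congrArg (fun x : ℚ => (x : ℝ)) hsplit
    simp only [hOsum] at h
    push_cast at h
    rw [hq] at h
    linarith
  have hF : (⌊α⌋ : ℝ) = α - Int.fract α := by
    rw [Int.fract]; ring
  have hF0 : 0 ≤ Int.fract α := Int.fract_nonneg α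
  have hF1 : Int.fract α < 1 := Int.fract_lt_one α
  have hm1 : (1 : ℤ) ≤ ⌊α⌋ := Int.le_floor.mpr (by norm_num; linarith)
  have hhigh : (∑ i ∈ B, ((f i : ℝ))) ≤ (t : ℝ) * α + t := by
    have := Finset.sum_le_card_nsmul B (fun i => ((f i : ℝ))) (α + 1)
      (fun i hi => (hbig i hi).2.2)
    simpa [nsmul_eq_mul, ht] using this
  have hlow : ∀ _ : 1 ≤ t, (t : ℝ) * α < ∑ i ∈ B, ((f i : ℝ)) := by
    intro h3
    have hne : B.Nonempty := Finset.card_pos.mp (by omega)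
    have := Finset.sum_lt_sum_of_nonempty hne
      (f := fun _ => α) (g := fun i => ((f i : ℝ))) (fun i hi => (hbig i hi).2.1)
    rwa [Finset.sum_const, nsmul_eq_mul, ← ht] at this
  rcases Nat.lt_or_ge t 3 with hlt | hge
  · have ht3 : t = 0 ∨ t = 1 ∨ t = 2 := by omega
    rcases ht3 with h0 | h0 | h0
    · -- t = 0 : impossible, 2q would be a natural number
      exfalso
      have hBe : B = ∅ := Finset.card_eq_zero.mp (by rw [← ht]; exact h0)
      rw [hBe, Finset.sum_empty] at hmain
      set d : ℤ := (s : ℤ) - 2 * ⌊α⌋ with hd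
      have hdr : (d : ℝ) = 2 * Int.fract α + 2 * ε := by
        push_cast [hd, hF]
        linarith
      have hd0 : 0 < d := by
        have : (0 : ℝ) < (d : ℝ) := by rw [hdr]; linarith
        exact_mod_cast this
      have hd2 : d < 2 := by
        have : (d : ℝ) < 2 := by rw [hdr]; linarith
        exact_mod_cast this
      have : d = 1 := by omega
      rw [this] at hdr
      norm_num at hdr
      exact h2 hdr.symm
    · -- t = 1 : length is ⌊α⌋ + 1
      right
      have hSl := hlow (by omega)
      rw [h0] at hSl hhigh
      norm_num at hSl hhigh
      set d : ℤ := (s : ℤ) - ⌊α⌋ with hd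
      have hdlt : (d : ℝ) < 1 := by
        push_cast [hd, hF]
        linarith
      have hdgt : (-1 : ℝ) < (d : ℝ) := by
        push_cast [hd, hF]
        linarith
      have hd1 : d < 1 := by exact_mod_cast hdlt
      have hd2 : -1 < d := by exact_mod_cast hdgt
      have hd0 : d = 0 := by omega
      have hsm : (s : ℤ) = ⌊α⌋ := by omega
      have : ⌊α⌋.toNat = s := by omega
      omega
    · -- t = 2 : length is 2
      left
      have hSl := hlow (by omega)
      rw [h0] at hSl
      norm_num at hSl
      have hs1 : (s : ℝ) < 1 := by linarith
      have : s = 0 := by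
        have : s < 1 := by exact_mod_cast hs1
        omega
      omega
  · -- t ≥ 3 : impossible
    exfalso
    have hSl := hlow (by omega)
    have ht3 : (3 : ℝ) ≤ (t : ℝ) := by exact_mod_cast hge
    have : (3 : ℝ) * α ≤ (t : ℝ) * α := by nlinarith
    have hs0 : (0 : ℝ) ≤ (s : ℝ) := Nat.cast_nonneg s
    nlinarith

end Classify

section Members
variable {α : ℝ}

lemma two_mem_L (hα : 1 < α) {q : ℚ} {ε : ℝ}
    (hε : 0 < ε) (h1 : Int.fract α + 2 * ε < 1)
    (hq : (q : ℝ) = α + ε) : 2 ∈ PuiseuxL (Halpha α hα) (2 * q) := by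
  have hF : (⌊α⌋ : ℝ) = α - Int.fract α := by rw [Int.fract]; ring
  have hF0 : 0 ≤ Int.fract α := Int.fract_nonneg α
  have hqa : PuiseuxAtom (Halpha α hα) q := by
    refine atom_big (by rw [hq]; linarith) (by rw [hq]; linarith) ?_
    intro n hn
    have hd : (((n : ℤ) - ⌊α⌋ : ℤ) : ℝ) = Int.fract α + ε := by
      have hnr : ((n : ℕ) : ℝ) = α + ε := by
        rw [← hq, hn]; push_cast; ring
      push_cast [hF]
      linarith
    have h0 : (0 : ℤ) < (n : ℤ) - ⌊α⌋ := by
      have : (0 : ℝ) < (((n : ℤ) - ⌊α⌋ : ℤ) : ℝ) := by rw [hd]; linarith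
      exact_mod_cast this
    have h1' : (n : ℤ) - ⌊α⌋ < 1 := by
      have : ((((n : ℤ) - ⌊α⌋ : ℤ)) : ℝ) < 1 := by rw [hd]; linarith
      exact_mod_cast this
    omega
  refine ⟨![q, q], ?_, ?_⟩
  · intro i; fin_cases i <;> exact hqa
  · rw [Fin.sum_univ_two]; simp; ring

lemma big_mem_L (hα : 1 < α) {q : ℚ} {ε : ℝ}
    (hε : 0 < ε) (h1 : Int.fract α + 2 * ε < 1) (h2 : 2 * Int.fract α + 2 * ε ≠ 1)
    (hq : (q : ℝ) = α + ε) : ⌊α⌋.toNat + 1 ∈ PuiseuxL (Halpha α hα) (2 * q) := by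
  have hF : (⌊α⌋ : ℝ) = α - Int.fract α := by rw [Int.fract]; ring
  have hF0 : 0 ≤ Int.fract α := Int.fract_nonneg α
  have hF1 : Int.fract α < 1 := Int.fract_lt_one α
  have hm1 : (1 : ℤ) ≤ ⌊α⌋ := Int.le_floor.mpr (by norm_num; linarith)
  set u : ℚ := 2 * q - (⌊α⌋ : ℚ) with hu
  have hur : (u : ℝ) = α + Int.fract α + 2 * ε := by
    push_cast [hu, hF]
    rw [hq]; ring
  have hua : PuiseuxAtom (Halpha α hα) u := by
    refine atom_big (by rw [hur]; linarith) (by rw [hur]; linarith) ?_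
    intro n hn
    have hd : (((n : ℤ) - ⌊α⌋ : ℤ) : ℝ) = 2 * Int.fract α + 2 * ε := by
      push_cast [hF]
      have : ((n : ℚ) : ℝ) = (u : ℝ) := by rw [← hn]
      rw [hur] at this
      push_cast at this
      linarith
    have h0 : (0 : ℤ) < (n : ℤ) - ⌊α⌋ := by
      have : (0 : ℝ) < (((n : ℤ) - ⌊α⌋ : ℤ) : ℝ) := by rw [hd]; linarith
      exact_mod_cast this
    have h1' : (n : ℤ) - ⌊α⌋ < 2 := by
      have : ((((n : ℤ) - ⌊α⌋ : ℤ)) : ℝ) < 2 := by rw [hd]; linarith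
      exact_mod_cast this
    have : (n : ℤ) - ⌊α⌋ = 1 := by omega
    apply h2
    rw [← hd, this]
    norm_num
  refine ⟨fun i => if i = 0 then u else 1, ?_, ?_⟩
  · intro i
    by_cases h : i = 0
    · simpa [h] using hua
    · simpa [h] using atom_one
  · rw [Fin.sum_univ_succ]
    simp only [if_pos rfl]
    have : ∀ i : Fin ⌊α⌋.toNat, (if (i.succ : Fin (⌊α⌋.toNat + 1)) = 0 then u else 1) = 1 := by
      intro i
      rw [if_neg (Fin.succ_ne_zero i)]
    rw [Finset.sum_congr rfl (fun i _ => this i)]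
    rw [Finset.sum_const]
    simp only [Finset.card_univ, Fintype.card_fin, nsmul_eq_mul, mul_one]
    rw [hu]
    have : ((⌊α⌋.toNat : ℕ) : ℚ) = ((⌊α⌋ : ℤ) : ℚ) := by
      exact_mod_cast congrArg (fun z : ℤ => (z : ℚ)) (Int.toNat_of_nonneg (by omega))
    rw [this]
    simp only [if_true]
    ring

end Members

lemma delta_one {α : ℝ} (hα : 1 < α) : 1 ∈ PuiseuxDelta (Halpha α hα) := by
  have hc1 : 2 * α + 1 ≤ (⌈2 * α + 1⌉ : ℝ) := Int.le_ceil _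
  have hc2 : ((⌈2 * α + 1⌉ : ℤ) : ℝ) < 2 * α + 2 := by
    have := Int.ceil_lt_add_one (2 * α + 1)
    linarith
  obtain ⟨u, hu1, hu2⟩ := exists_rat_btwn
    (show ((⌈2 * α + 1⌉ : ℤ) : ℝ) / 2 < α + 1 by linarith)
  -- 2u is not an integer
  have no2 : ∀ d : ℤ, (2 * u : ℚ) ≠ (d : ℚ) := by
    intro d hd
    have hdr : ((d : ℤ) : ℝ) = 2 * (u : ℝ) := by exact_mod_cast congrArg (fun x : ℚ => (x : ℝ)) hd.symm
    have hlow : ((⌈2 * α + 1⌉ : ℤ) : ℝ) < (d : ℝ) := by rw [hdr]; linarith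
    have hhigh : (d : ℝ) < ((⌈2 * α + 1⌉ : ℤ) : ℝ) + 1 := by
      rw [hdr]; linarith
    have h1 : (⌈2 * α + 1⌉ : ℤ) < d := by exact_mod_cast hlow
    have h2 : d < ⌈2 * α + 1⌉ + 1 := by exact_mod_cast hhigh
    omega
  have huα : α < (u : ℝ) := by linarith
  have huα1 : (u : ℝ) < α + 1 := hu2
  have hua : PuiseuxAtom (Halpha α hα) u := by
    refine atom_big huα huα1.le ?_
    intro n hn
    exact no2 (2 * n) (by rw [hn]; push_cast; ring)
  set v : ℚ := u - 1/2 with hv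
  have hvr : (v : ℝ) = (u : ℝ) - 1/2 := by push_cast [hv]; ring
  have hva : PuiseuxAtom (Halpha α hα) v := by
    refine atom_big (by rw [hvr]; linarith) (by rw [hvr]; linarith) ?_
    intro n hn
    refine no2 (2 * n + 1) ?_
    rw [hv] at hn
    have hun : u = (n : ℚ) + 1/2 := by linarith [hn]
    rw [hun]; push_cast; ring
  refine ⟨one_pos, 2 * u, Or.inr (by push_cast; linarith), 2, ?_, ?_, ?_⟩
  · refine ⟨![u, u], ?_, ?_⟩
    · intro i; fin_cases i <;> exact hua
    · rw [Fin.sum_univ_two]; simp; ring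
  · refine ⟨![1, v, v], ?_, ?_⟩
    · intro i; fin_cases i
      · exact atom_one
      · exact hva
      · exact hva
    · rw [Fin.sum_univ_three]; simp [hv]; ring
  · intro j hj1 hj2
    omega

/-- For α > 1 irrational and H = ℕ₀ ∪ ℚ>α: min Δ(H) = 1, and for ε > 0 with
ᾱ + 2ε < 1 and 2ᾱ + 2ε ≠ 1 (ᾱ = α − ⌊α⌋), the element 2(α+ε) of H has set of
lengths exactly {2, ⌊α⌋ + 1}. -/
theorem Halpha_min_delta_and_lengths (α : ℝ) (hα : 1 < α) (hirr : Irrational α) :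
    IsLeast (PuiseuxDelta (Halpha α hα)) 1 ∧
    ∀ ε : ℝ, 0 < ε → Int.fract α + 2 * ε < 1 → 2 * Int.fract α + 2 * ε ≠ 1 →
      ∀ q : ℚ, (q : ℝ) = α + ε →
        PuiseuxL (Halpha α hα) (2 * q) = {2, ⌊α⌋.toNat + 1} := by
  constructor
  · exact ⟨delta_one hα, fun d hd => hd.1⟩
  · intro ε hε h1 h2 q hq
    ext k
    simp only [Set.mem_insert_iff, Set.mem_singleton_iff]
    constructor
    · exact length_classify hα hε h1 h2 hq
    · rintro (rfl | rfl)
      · exact two_mem_L hα hε h1 hq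
      · exact big_mem_L hα hε h1 h2 hq
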